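/- The 3×3 matrix L₀ over A with rows (h, −v⁻, 2X⁻), (v⁺, 0, v⁻), (2X⁺, v⁺, −h) satisfies the cubic characteristic equation L₀³ + 2L₀² − (c₂ − 1)·L₀ − c₂·I₃ = 0 in the matrix ring M₃(A), where c₂·M denotes entrywise left multiplication by c₂ and I₃ is the identity matrix. -/
import Mathlib

set_option maxRecDepth 8000 in
set_option maxHeartbeats 4000000 in
theorem osp12_L0_cubic {A : Type*} [Ring A] [Algebra ℂ A]
    (h Xp Xm vp vm : A)
    (rel_hXp : h * Xp - Xp * h = (2:ℂ) • Xp)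
    (rel_hXm : h * Xm - Xm * h = (-2:ℂ) • Xm)
    (rel_XpXm : Xp * Xm - Xm * Xp = h)
    (rel_hvp : h * vp - vp * h = vp)
    (rel_hvm : h * vm - vm * h = -vm)
    (rel_vpvm : vp * vm + vm * vp = -h)
    (rel_Xmvp : Xm * vp - vp * Xm = vm)
    (rel_Xpvm : Xp * vm - vm * Xp = vp)
    (rel_vpvp : vp * vp = Xp)
    (rel_vmvm : vm * vm = -Xm)
    (rel_Xpvp : Xp * vp = vp * Xp)
    (rel_Xmvm : Xm * vm = vm * Xm)
    (c2 : A) (hc2 : c2 = h * h - h + (4:ℂ) • (Xp * Xm) + (2:ℂ) • (vp * vm))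
    (L0 : Matrix (Fin 3) (Fin 3) A)
    (hL0 : L0 = !![h, -vm, (2:ℂ) • Xm; vp, 0, vm; (2:ℂ) • Xp, vp, -h]) :
    L0 ^ 3 + (2:ℂ) • L0 ^ 2 - (c2 - 1) • L0 - c2 • (1 : Matrix (Fin 3) (Fin 3) A) = 0 := by
  have s2 : ∀ x : A, (2:ℂ) • x = 2 * x := fun x => by
    rw [Algebra.smul_def, map_ofNat]
  have s4 : ∀ x : A, (4:ℂ) • x = 4 * x := fun x => by
    rw [Algebra.smul_def, map_ofNat]
  have sn2 : ∀ x : A, (-2:ℂ) • x = -(2 * x) := fun x => by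
    rw [neg_smul, s2]
  -- normal ordering rules: Xm < vm < h < vp < Xp
  have r1 : vm * Xm = Xm * vm := rel_Xmvm.symm
  have r2 : h * Xm = Xm * h - 2 * Xm := by
    have e := rel_hXm; rw [sn2, sub_eq_iff_eq_add] at e; rw [e]; noncomm_ring
  have r3 : h * vm = vm * h - vm := by
    have e := rel_hvm; rw [sub_eq_iff_eq_add] at e; rw [e]; noncomm_ring
  have r4 : vp * Xm = Xm * vp - vm := by
    have e := rel_Xmvp; rw [sub_eq_iff_eq_add'] at e; rw [eq_sub_iff_add_eq, ← e]
  have r5 : vp * vm = -h - vm * vp := by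
    rw [eq_sub_iff_add_eq, ← rel_vpvm]
  have r6 : vp * h = h * vp - vp := by
    have e := rel_hvp; rw [sub_eq_iff_eq_add'] at e; rw [eq_sub_iff_add_eq, ← e]
  have r7 : Xp * Xm = Xm * Xp + h := by
    have e := rel_XpXm; rw [sub_eq_iff_eq_add] at e; rw [e]; exact add_comm _ _
  have r8 : Xp * vm = vm * Xp + vp := by
    have e := rel_Xpvm; rw [sub_eq_iff_eq_add] at e; rw [e]; exact add_comm _ _
  have r9 : Xp * h = h * Xp - 2 * Xp := by
    have e := rel_hXp; rw [s2, sub_eq_iff_eq_add'] at e; rw [eq_sub_iff_add_eq, ← e]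
  have r10 : Xp * vp = vp * Xp := rel_Xpvp
  -- primed versions with a trailing factor
  have mk : ∀ a b : A, ∀ rhs : A, a * b = rhs → ∀ t : A, a * (b * t) = rhs * t :=
    fun a b rhs e t => by rw [← mul_assoc, e]
  have r1' := mk _ _ _ r1
  have r2' := mk _ _ _ r2
  have r3' := mk _ _ _ r3
  have r4' := mk _ _ _ r4
  have r5' := mk _ _ _ r5
  have r6' := mk _ _ _ r6
  have r7' := mk _ _ _ r7
  have r8' := mk _ _ _ r8
  have r9' := mk _ _ _ r9
  have r10' := mk _ _ _ r10
  have rpp' := mk _ _ _ rel_vpvp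
  have rmm' := mk _ _ _ rel_vmvm
  -- numerals are central
  have cn2 : ∀ x y : A, x * (2 * y) = 2 * (x * y) := fun x y => by
    rw [← mul_assoc, ((Commute.ofNat_right x 2).eq : x * 2 = 2 * x), mul_assoc]
  have cn2' : ∀ x : A, x * 2 = 2 * x := fun x => (Commute.ofNat_right x 2).eq
  have cn3 : ∀ x y : A, x * (3 * y) = 3 * (x * y) := fun x y => by
    rw [← mul_assoc, ((Commute.ofNat_right x 3).eq : x * 3 = 3 * x), mul_assoc]
  have cn4 : ∀ x y : A, x * (4 * y) = 4 * (x * y) := fun x y => by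
    rw [← mul_assoc, ((Commute.ofNat_right x 4).eq : x * 4 = 4 * x), mul_assoc]
  have ch2 : ∀ y : A, h * (2 * y) = 2 * (h * y) := fun y => cn2 h y
  have ch3 : ∀ y : A, h * (3 * y) = 3 * (h * y) := fun y => cn3 h y
  have ch4 : ∀ y : A, h * (4 * y) = 4 * (h * y) := fun y => cn4 h y
  have cXp2 : ∀ y : A, Xp * (2 * y) = 2 * (Xp * y) := fun y => cn2 Xp y
  have cXp3 : ∀ y : A, Xp * (3 * y) = 3 * (Xp * y) := fun y => cn3 Xp y
  have cXp4 : ∀ y : A, Xp * (4 * y) = 4 * (Xp * y) := fun y => cn4 Xp y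
  have cXm2 : ∀ y : A, Xm * (2 * y) = 2 * (Xm * y) := fun y => cn2 Xm y
  have cXm3 : ∀ y : A, Xm * (3 * y) = 3 * (Xm * y) := fun y => cn3 Xm y
  have cXm4 : ∀ y : A, Xm * (4 * y) = 4 * (Xm * y) := fun y => cn4 Xm y
  have cvp2 : ∀ y : A, vp * (2 * y) = 2 * (vp * y) := fun y => cn2 vp y
  have cvp3 : ∀ y : A, vp * (3 * y) = 3 * (vp * y) := fun y => cn3 vp y
  have cvp4 : ∀ y : A, vp * (4 * y) = 4 * (vp * y) := fun y => cn4 vp y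
  have cvm2 : ∀ y : A, vm * (2 * y) = 2 * (vm * y) := fun y => cn2 vm y
  have cvm3 : ∀ y : A, vm * (3 * y) = 3 * (vm * y) := fun y => cn3 vm y
  have cvm4 : ∀ y : A, vm * (4 * y) = 4 * (vm * y) := fun y => cn4 vm y
  simp only [s2] at hL0
  have hc2' : c2 = (4 : A) * (Xm * Xp) + (-2 : A) * (vm * vp) + h + h * h := by
    rw [hc2, s4, s2, r7, r5]; noncomm_ring
  have hM2 : L0 * L0 =
      !![(4 : A) * (Xm * Xp) + (-1 : A) * (vm * vp) + h * h, (2 : A) * (Xm * vp) + vm + (-1 : A) * (vm * h), (-3 : A) * (Xm);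
      (2 : A) * (vm * Xp) + h * vp + (-1 : A) * (vp), (2 : A) * (vm * vp) + h, (2 : A) * (Xm * vp) + (-2 : A) * (vm) + (-1 : A) * (vm * h);
      (-3 : A) * (Xp), (-2 : A) * (vm * Xp) + (-1 : A) * (h * vp) + (-2 : A) * (vp), (4 : A) * (Xm * Xp) + (-1 : A) * (vm * vp) + (3 : A) * (h) + h * h] := by
    rw [hL0]
    ext i j
    fin_cases i <;> fin_cases j <;>
      simp [Matrix.mul_apply, Fin.sum_univ_three] <;>
      simp only [mul_add, add_mul, mul_sub, sub_mul, mul_neg, neg_mul, mul_assoc,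
        mul_zero, zero_mul, mul_one, one_mul, neg_neg, ch2, ch3, ch4, cXp2, cXp3, cXp4, cXm2, cXm3, cXm4, cvp2, cvp3, cvp4, cvm2, cvm3, cvm4,
        r1, r2, r3, r4, r5, r6, r7, r8, r9, r10, rel_vpvp, rel_vmvm,
        r1', r2', r3', r4', r5', r6', r7', r8', r9', r10', rpp', rmm'] <;>
      first
        | rfl
        | noncomm_ring
  have hM3 :
      (!![(4 : A) * (Xm * Xp) + (-1 : A) * (vm * vp) + h * h, (2 : A) * (Xm * vp) + vm + (-1 : A) * (vm * h), (-3 : A) * (Xm);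
      (2 : A) * (vm * Xp) + h * vp + (-1 : A) * (vp), (2 : A) * (vm * vp) + h, (2 : A) * (Xm * vp) + (-2 : A) * (vm) + (-1 : A) * (vm * h);
      (-3 : A) * (Xp), (-2 : A) * (vm * Xp) + (-1 : A) * (h * vp) + (-2 : A) * (vp), (4 : A) * (Xm * Xp) + (-1 : A) * (vm * vp) + (3 : A) * (h) + h * h]) * L0 =
      !![(4 : A) * (Xm * (h * Xp)) + (-12 : A) * (Xm * Xp) + (-2 : A) * (vm * (h * vp)) + (2 : A) * (vm * vp) + h * (h * h), (-4 : A) * (Xm * (vm * Xp)) + (-6 : A) * (Xm * vp) + (-1 : A) * (vm) + vm * h + (-1 : A) * (vm * (h * h)), (4 : A) * (Xm) + (8 : A) * (Xm * (Xm * Xp)) + (-4 : A) * (Xm * (vm * vp)) + (2 : A) * (Xm * h) + (2 : A) * (Xm * (h * h));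
      (4 : A) * (Xm * (vp * Xp)) + (-6 : A) * (vm * Xp) + h * (h * vp) + (-1 : A) * (h * vp) + vp, (4 : A) * (Xm * Xp) + (-6 : A) * (vm * vp) + (-1 : A) * (h) + h * h, (4 : A) * (Xm * (vm * Xp)) + (-2 : A) * (Xm * vp) + (3 : A) * (vm) + (3 : A) * (vm * h) + vm * (h * h);
      (8 : A) * (Xm * (Xp * Xp)) + (-4 : A) * (vm * (vp * Xp)) + (2 : A) * (h * (h * Xp)) + (2 : A) * (h * Xp) + (4 : A) * (Xp), (4 : A) * (Xm * (vp * Xp)) + (2 : A) * (vm * Xp) + h * (h * vp) + (3 : A) * (h * vp) + (3 : A) * (vp), (-4 : A) * (Xm * (h * Xp)) + (4 : A) * (Xm * Xp) + (2 : A) * (vm * (h * vp)) + (-2 : A) * (vm * vp) + (-4 : A) * (h) + (-2 : A) * (h * h) + (-1 : A) * (h * (h * h))] := by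
    rw [hL0]
    ext i j
    fin_cases i <;> fin_cases j <;>
      simp [Matrix.mul_apply, Fin.sum_univ_three] <;>
      simp only [mul_add, add_mul, mul_sub, sub_mul, mul_neg, neg_mul, mul_assoc,
        mul_zero, zero_mul, mul_one, one_mul, neg_neg, ch2, ch3, ch4, cXp2, cXp3, cXp4, cXm2, cXm3, cXm4, cvp2, cvp3, cvp4, cvm2, cvm3, cvm4,
        r1, r2, r3, r4, r5, r6, r7, r8, r9, r10, rel_vpvp, rel_vmvm,
        r1', r2', r3', r4', r5', r6', r7', r8', r9', r10', rpp', rmm'] <;>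
      first
        | rfl
        | noncomm_ring
  have hC : c2 • L0 =
      !![(4 : A) * (Xm * (h * Xp)) + (-8 : A) * (Xm * Xp) + (-2 : A) * (vm * (h * vp)) + (2 : A) * (vm * vp) + h * h + h * (h * h), (-4 : A) * (Xm * (vm * Xp)) + (-2 : A) * (Xm * vp) + (-1 : A) * (vm * h) + (-1 : A) * (vm * (h * h)), (8 : A) * (Xm * (Xm * Xp)) + (-4 : A) * (Xm * (vm * vp)) + (2 : A) * (Xm * h) + (2 : A) * (Xm * (h * h));
      (4 : A) * (Xm * (vp * Xp)) + (-2 : A) * (vm * Xp) + h * (h * vp) + h * vp, (0 : A), (4 : A) * (Xm * (vm * Xp)) + (2 : A) * (Xm * vp) + vm * h + vm * (h * h);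
      (8 : A) * (Xm * (Xp * Xp)) + (-4 : A) * (vm * (vp * Xp)) + (2 : A) * (h * (h * Xp)) + (2 : A) * (h * Xp), (4 : A) * (Xm * (vp * Xp)) + (-2 : A) * (vm * Xp) + h * (h * vp) + h * vp, (-4 : A) * (Xm * (h * Xp)) + (8 : A) * (Xm * Xp) + (2 : A) * (vm * (h * vp)) + (-2 : A) * (vm * vp) + (-1 : A) * (h * h) + (-1 : A) * (h * (h * h))] := by
    rw [hL0, hc2']
    ext i j
    fin_cases i <;> fin_cases j <;>
      simp [Matrix.smul_apply, smul_eq_mul] <;>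
      simp only [mul_add, add_mul, mul_sub, sub_mul, mul_neg, neg_mul, mul_assoc,
        mul_zero, zero_mul, mul_one, one_mul, neg_neg, ch2, ch3, ch4, cXp2, cXp3, cXp4, cXm2, cXm3, cXm4, cvp2, cvp3, cvp4, cvm2, cvm3, cvm4,
        r1, r2, r3, r4, r5, r6, r7, r8, r9, r10, rel_vpvp, rel_vmvm,
        r1', r2', r3', r4', r5', r6', r7', r8', r9', r10', rpp', rmm'] <;>
      first
        | rfl
        | noncomm_ring
  rw [pow_succ, pow_two, hM2, hM3, sub_smul, one_smul, hC, hc2', hL0,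
    Matrix.one_fin_three]
  ext i j
  fin_cases i <;> fin_cases j <;>
    simp [Matrix.add_apply, Matrix.sub_apply, Matrix.smul_apply, Matrix.zero_apply,
      Matrix.vecHead, Matrix.vecTail, s2, smul_eq_mul, mul_one, mul_zero] <;>
    first
      | rfl
      | noncomm_ring
      | abel
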